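/- For each integer n ≥ 3, the closed region in the complex plane enclosed by the curve r(θ) = cosⁿ(π/n) secⁿ((θ−π)/n), θ ∈ [0,2π], is convex. -/

import Mathlib

open Real
set_option maxHeartbeats 1000000

lemma two_point (n : ℕ) (hn : 3 ≤ n) (x y m : ℝ)
    (hx : x ∈ Set.Icc (-(π/2)) (π/2)) (hy : y ∈ Set.Icc (-(π/2)) (π/2))
    (hm : (n:ℝ) * m = x + ((n:ℝ)-1) * y) :
    Real.cos x * Real.cos y ^ (n-1) ≤ Real.cos m ^ n := by
  have hn0 : (0:ℝ) < n := by positivity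
  have hcx : 0 ≤ Real.cos x := Real.cos_nonneg_of_mem_Icc hx
  have hcy : 0 ≤ Real.cos y := Real.cos_nonneg_of_mem_Icc hy
  have hw₁ : (0:ℝ) ≤ 1/n := by positivity
  have hw₂ : (0:ℝ) ≤ ((n:ℝ)-1)/n := by
    apply div_nonneg _ hn0.le
    have : (1:ℝ) ≤ n := by exact_mod_cast Nat.one_le_of_lt hn
    linarith
  have hsum : 1/(n:ℝ) + ((n:ℝ)-1)/n = 1 := by field_simp; ring
  have hmx : (1/(n:ℝ)) • x + (((n:ℝ)-1)/n) • y = m := by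
    simp only [smul_eq_mul]
    field_simp
    linarith [hm]
  have hconc := (strictConcaveOn_cos_Icc.concaveOn).2 hx hy hw₁ hw₂ hsum
  rw [hmx] at hconc
  simp only [smul_eq_mul] at hconc
  have hgm := Real.geom_mean_le_arith_mean2_weighted hw₁ hw₂ hcx hcy hsum
  have hchain : Real.cos x ^ (1/(n:ℝ)) * Real.cos y ^ (((n:ℝ)-1)/n) ≤ Real.cos m :=
    hgm.trans hconc
  have hlhs0 : 0 ≤ Real.cos x ^ (1/(n:ℝ)) * Real.cos y ^ (((n:ℝ)-1)/n) := by positivity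
  have := pow_le_pow_left₀ hlhs0 hchain n
  calc Real.cos x * Real.cos y ^ (n-1)
      = (Real.cos x ^ (1/(n:ℝ)) * Real.cos y ^ (((n:ℝ)-1)/n)) ^ n := by
        rw [mul_pow, ← Real.rpow_natCast (Real.cos x ^ (1/(n:ℝ))) n,
          ← Real.rpow_natCast (Real.cos y ^ (((n:ℝ)-1)/n)) n,
          ← Real.rpow_mul hcx, ← Real.rpow_mul hcy]
        rw [one_div, inv_mul_cancel₀ (by positivity : (n:ℝ) ≠ 0), Real.rpow_one]
        rw [div_mul_cancel₀ _ (by positivity : (n:ℝ) ≠ 0)]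
        congr 1
        rw [← Real.rpow_natCast (Real.cos y) (n-1)]
        congr 1
        have : (1:ℕ) ≤ n := Nat.one_le_of_lt hn
        push_cast [this]
        ring
    _ ≤ Real.cos m ^ n := this

lemma keytrig_aux (n : ℕ) (hn : 3 ≤ n) (a b : ℝ) (ha : |a| ≤ π/n) (hb : |b| ≤ π/n)
    (hX : 0 ≤ (n:ℝ)*a - ((n:ℝ)-1)*b) :
    Real.cos ((n:ℝ)*a - ((n:ℝ)-1)*b) * Real.cos b ^ (n-1) ≤ Real.cos a ^ n := by
  have hn3 : (3:ℝ) ≤ n := by exact_mod_cast hn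
  have hπ := Real.pi_pos
  have hπn : π/n ≤ π/3 := by
    apply div_le_div_of_nonneg_left hπ.le (by norm_num) hn3
  have hπn0 : 0 < π/n := by positivity
  have haa := abs_le.1 ha
  have hbb := abs_le.1 hb
  have hca : 0 < Real.cos a := Real.cos_pos_of_mem_Ioo ⟨by nlinarith [haa.1], by nlinarith [haa.2]⟩
  have hcb : 0 < Real.cos b := Real.cos_pos_of_mem_Ioo ⟨by nlinarith [hbb.1], by nlinarith [hbb.2]⟩
  obtain ⟨X, hXdef⟩ : ∃ X, X = (n:ℝ)*a - ((n:ℝ)-1)*b := ⟨_, rfl⟩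
  rw [← hXdef] at hX ⊢
  rcases le_or_gt (Real.cos X) 0 with hc | hc
  · calc Real.cos X * Real.cos b ^ (n-1) ≤ 0 :=
        mul_nonpos_of_nonpos_of_nonneg hc (pow_nonneg hcb.le _)
    _ ≤ Real.cos a ^ n := (pow_pos hca n).le
  rcases le_or_gt X (π/2) with hX2 | hX2
  · exact two_point n hn X b a ⟨by linarith, hX2⟩ ⟨by linarith, by linarith⟩ (by rw [hXdef]; ring)
  · -- X > π/2, cos X > 0, so X > 3π/2
    have hXub : X ≤ 2*π - π/n := by
      have h1 : (n:ℝ)*a ≤ π := by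
        calc (n:ℝ)*a ≤ (n:ℝ)*(π/n) := by nlinarith [haa.2]
        _ = π := by field_simp
      have h2 : -(((n:ℝ)-1)*b) ≤ π - π/n := by
        have : -b ≤ π/n := by linarith [hbb.1]
        calc -(((n:ℝ)-1)*b) = ((n:ℝ)-1)*(-b) := by ring
        _ ≤ ((n:ℝ)-1)*(π/n) := by nlinarith
        _ = π - π/n := by field_simp
      linarith
    have h32 : 3*π/2 < X := by
      by_contra h
      push_neg at h
      have := Real.cos_nonpos_of_pi_div_two_le_of_le hX2.le (by linarith)
      linarith
    obtain ⟨e, hedef⟩ : ∃ e, e = 2*π - X := ⟨_, rfl⟩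
    have hce : Real.cos X = Real.cos e := by
      rw [hedef, Real.cos_two_pi_sub]
    have he1 : π/n ≤ e := by linarith
    have he2 : e < π/2 := by linarith
    obtain ⟨m, hmdef⟩ : ∃ m, m = 2*π/(n:ℝ) - a := ⟨_, rfl⟩
    have hmn : (n:ℝ)*m = e + ((n:ℝ)-1)*(-b) := by
      rw [hmdef, hedef, hXdef]
      field_simp
      ring
    have htp := two_point n hn e (-b) m ⟨by linarith, he2.le⟩
      ⟨by linarith, by linarith⟩ hmn
    rw [Real.cos_neg] at htp
    have hm1 : π/n ≤ m := by
      rw [hmdef]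
      have : 2*π/n = π/n + π/n := by ring
      linarith [haa.2]
    have hm2 : m ≤ π/2 := by
      have hu : (n:ℝ)*(π/n) = π := by field_simp
      have hnb : -b ≤ π/n := by linarith
      have h5 : ((n:ℝ)-1)*(-b) ≤ ((n:ℝ)-1)*(π/n) :=
        mul_le_mul_of_nonneg_left hnb (by linarith)
      have f1 : π ≤ ((n:ℝ)-1)*(π/2) := by nlinarith
      have hgoal : (n:ℝ)*m ≤ (n:ℝ)*(π/2) := by
        rw [hmn]; nlinarith
      exact le_of_mul_le_mul_left hgoal (by positivity)
    have hcm : 0 ≤ Real.cos m := Real.cos_nonneg_of_mem_Icc ⟨by linarith, hm2⟩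
    have hma : Real.cos m ≤ Real.cos a := by
      calc Real.cos m ≤ Real.cos |a| := by
            apply Real.cos_le_cos_of_nonneg_of_le_pi (abs_nonneg a) (by linarith) (by linarith)
      _ = Real.cos a := Real.cos_abs a
    calc Real.cos X * Real.cos b ^ (n-1) = Real.cos e * Real.cos b ^ (n-1) := by rw [hce]
    _ ≤ Real.cos m ^ n := htp
    _ ≤ Real.cos a ^ n := pow_le_pow_left₀ hcm hma n

lemma keytrig (n : ℕ) (hn : 3 ≤ n) (a b : ℝ) (ha : |a| ≤ π/n) (hb : |b| ≤ π/n) :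
    Real.cos ((n:ℝ)*a - ((n:ℝ)-1)*b) * Real.cos b ^ (n-1) ≤ Real.cos a ^ n := by
  rcases le_or_gt 0 ((n:ℝ)*a - ((n:ℝ)-1)*b) with h | h
  · exact keytrig_aux n hn a b ha hb h
  · have := keytrig_aux n hn (-a) (-b) (by rwa [abs_neg]) (by rwa [abs_neg]) (by linarith [h])
    have heq : (n:ℝ)*(-a) - ((n:ℝ)-1)*(-b) = -((n:ℝ)*a - ((n:ℝ)-1)*b) := by ring
    rw [heq, Real.cos_neg, Real.cos_neg, Real.cos_neg] at this
    exact this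


lemma star_real (n : ℕ) (hn : 3 ≤ n) (a b ρ σ : ℝ) (hρ : 0 ≤ ρ) (hσ : 0 ≤ σ)
    (ha : |a| ≤ π/n) (hb : |b| ≤ π/n) (h : ρ * Real.cos a ≤ σ * Real.cos b) :
    ρ^n * σ^(n-1) * Real.cos ((n:ℝ)*a - ((n:ℝ)-1)*b) ≤ σ^(n-1) * σ^(n-1) * (σ * Real.cos b) := by
  have hn3 : (3:ℝ) ≤ n := by exact_mod_cast hn
  have hπ := Real.pi_pos
  have hπn : π/n ≤ π/3 := div_le_div_of_nonneg_left hπ.le (by norm_num) hn3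
  have haa := abs_le.1 ha
  have hbb := abs_le.1 hb
  have hca : 0 < Real.cos a := Real.cos_pos_of_mem_Ioo ⟨by nlinarith [haa.1], by nlinarith [haa.2]⟩
  have hcb : 0 < Real.cos b := Real.cos_pos_of_mem_Ioo ⟨by nlinarith [hbb.1], by nlinarith [hbb.2]⟩
  obtain ⟨X, hXdef⟩ : ∃ X, X = (n:ℝ)*a - ((n:ℝ)-1)*b := ⟨_, rfl⟩
  rw [← hXdef]
  rcases le_or_gt (Real.cos X) 0 with hc | hc
  · calc ρ^n * σ^(n-1) * Real.cos X ≤ 0 :=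
        mul_nonpos_of_nonneg_of_nonpos (by positivity) hc
    _ ≤ σ^(n-1) * σ^(n-1) * (σ * Real.cos b) := by positivity
  · have key := keytrig n hn a b ha hb
    rw [← hXdef] at key
    have hbn : Real.cos b ^ n = Real.cos b * Real.cos b^(n-1) := by
      conv_lhs => rw [show n = (n-1)+1 by omega]
      rw [pow_succ]; ring
    have hσn : σ ^ n = σ^(n-1) * σ := by
      conv_lhs => rw [show n = (n-1)+1 by omega]
      rw [pow_succ]
    have s1 : ρ^n * Real.cos a^n ≤ σ^n * Real.cos b^n := by
      have := pow_le_pow_left₀ (mul_nonneg hρ hca.le) h n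
      rwa [mul_pow, mul_pow] at this
    have s2 : σ^n * Real.cos b^n * Real.cos X ≤ σ^n * Real.cos b * Real.cos a^n := by
      have h2 := mul_le_mul_of_nonneg_left key (show 0 ≤ σ^n * Real.cos b by positivity)
      calc σ^n * Real.cos b^n * Real.cos X
          = (σ^n * Real.cos b) * (Real.cos X * Real.cos b^(n-1)) := by rw [hbn]; ring
      _ ≤ (σ^n * Real.cos b) * Real.cos a^n := h2
      _ = σ^n * Real.cos b * Real.cos a^n := by ring
    have s3 : ρ^n * Real.cos X * Real.cos a^n ≤ σ^n * Real.cos b * Real.cos a^n := by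
      calc ρ^n * Real.cos X * Real.cos a^n = (ρ^n * Real.cos a^n) * Real.cos X := by ring
      _ ≤ (σ^n * Real.cos b^n) * Real.cos X := mul_le_mul_of_nonneg_right s1 hc.le
      _ ≤ σ^n * Real.cos b * Real.cos a^n := s2
    have h1 : ρ^n * Real.cos X ≤ σ^n * Real.cos b :=
      le_of_mul_le_mul_right s3 (pow_pos hca n)
    calc ρ^n * σ^(n-1) * Real.cos X = σ^(n-1) * (ρ^n * Real.cos X) := by ring
    _ ≤ σ^(n-1) * (σ^n * Real.cos b) :=
        mul_le_mul_of_nonneg_left h1 (pow_nonneg hσ (n-1))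
    _ = σ^(n-1) * σ^(n-1) * (σ * Real.cos b) := by rw [hσn]; ring


lemma star_complex (n : ℕ) (hn : 3 ≤ n) (v w : ℂ)
    (hv : Real.cos (π/n) * ‖v‖ ≤ v.re)
    (hw : Real.cos (π/n) * ‖w‖ ≤ w.re)
    (hvw : v.re ≤ w.re) :
    (v^n * (starRingEnd ℂ w)^(n-1)).re ≤
      ‖w‖ ^ (n-1) * ‖w‖ ^ (n-1) * w.re := by
  have hn3 : (3:ℝ) ≤ n := by exact_mod_cast hn
  have hπ := Real.pi_pos
  have hπn2 : π/n < π/2 := by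
    apply div_lt_div_of_pos_left hπ (by norm_num) (by norm_num at *; linarith)
  have hπn0 : 0 < π/(n:ℝ) := by positivity
  have hcπ : 0 < Real.cos (π/n) := Real.cos_pos_of_mem_Ioo ⟨by linarith, hπn2⟩
  rcases eq_or_ne v 0 with rfl | hv0
  · rw [zero_pow (by omega), zero_mul, Complex.zero_re]
    have : 0 ≤ w.re := le_trans (by positivity) hw
    positivity
  rcases eq_or_ne w 0 with rfl | hw0
  · rw [map_zero, zero_pow (by omega), mul_zero, Complex.zero_re]
    simp
  obtain ⟨a, hadef⟩ : ∃ a, a = Complex.arg v := ⟨_, rfl⟩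
  obtain ⟨b, hbdef⟩ : ∃ b, b = Complex.arg w := ⟨_, rfl⟩
  obtain ⟨ρ, hρdef⟩ : ∃ ρ, ρ = ‖v‖ := ⟨_, rfl⟩
  obtain ⟨σ, hσdef⟩ : ∃ σ, σ = ‖w‖ := ⟨_, rfl⟩
  have hρ0 : 0 < ρ := by rw [hρdef]; exact (norm_pos_iff.mpr hv0)
  have hσ0 : 0 < σ := by rw [hσdef]; exact (norm_pos_iff.mpr hw0)
  have hvre : v.re = ρ * Real.cos a := by
    rw [hρdef, hadef, Complex.norm_mul_cos_arg]
  have hwre : w.re = σ * Real.cos b := by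
    rw [hσdef, hbdef, Complex.norm_mul_cos_arg]
  have hcosa : Real.cos (π/n) ≤ Real.cos a := by
    have : Real.cos (π/n) * ρ ≤ ρ * Real.cos a := by rw [← hvre, hρdef]; exact hv
    nlinarith
  have hcosb : Real.cos (π/n) ≤ Real.cos b := by
    have : Real.cos (π/n) * σ ≤ σ * Real.cos b := by rw [← hwre, hσdef]; exact hw
    nlinarith
  have habs : ∀ x : ℝ, |x| ≤ π → Real.cos (π/n) ≤ Real.cos x → |x| ≤ π/n := by
    intro x hx hcx
    by_contra hcon
    push_neg at hcon
    have := Real.cos_lt_cos_of_nonneg_of_le_pi hπn0.le hx hcon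
    rw [Real.cos_abs] at this
    linarith
  have ha : |a| ≤ π/n := habs a (hadef ▸ Complex.abs_arg_le_pi v) hcosa
  have hb : |b| ≤ π/n := habs b (hbdef ▸ Complex.abs_arg_le_pi w) hcosb
  have hv' : v = (ρ:ℂ) * Complex.exp (a * Complex.I) := by
    rw [hρdef, hadef]; exact (Complex.norm_mul_exp_arg_mul_I v).symm
  have hw' : w = (σ:ℂ) * Complex.exp (b * Complex.I) := by
    rw [hσdef, hbdef]; exact (Complex.norm_mul_exp_arg_mul_I w).symm
  have hconj : (starRingEnd ℂ) w = (σ:ℂ) * Complex.exp ((-b : ℝ) * Complex.I) := by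
    rw [hw', map_mul, Complex.conj_ofReal, ← Complex.exp_conj]
    congr 1
    simp [Complex.conj_I]
  have e1 : Complex.exp ((a:ℝ) * Complex.I)^n * Complex.exp ((-b:ℝ) * Complex.I)^(n-1)
      = Complex.exp ((((n:ℝ)*a - ((n:ℝ)-1)*b : ℝ)) * Complex.I) := by
    rw [← Complex.exp_nat_mul, ← Complex.exp_nat_mul, ← Complex.exp_add]
    congr 1
    push_cast [Nat.cast_sub (show 1 ≤ n by omega)]
    ring
  have hre : (v^n * (starRingEnd ℂ w)^(n-1)).re
      = ρ^n * σ^(n-1) * Real.cos ((n:ℝ)*a - ((n:ℝ)-1)*b) := by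
    have : v^n * (starRingEnd ℂ w)^(n-1)
        = ((ρ^n * σ^(n-1) : ℝ) : ℂ) * Complex.exp ((((n:ℝ)*a - ((n:ℝ)-1)*b : ℝ)) * Complex.I) := by
      rw [hv', hconj, mul_pow, mul_pow]
      rw [show ((ρ:ℂ)^n * Complex.exp ((a:ℝ) * Complex.I)^n) * ((σ:ℂ)^(n-1) * Complex.exp ((-b:ℝ) * Complex.I)^(n-1)) = ((ρ:ℂ)^n * (σ:ℂ)^(n-1)) * (Complex.exp ((a:ℝ) * Complex.I)^n * Complex.exp ((-b:ℝ) * Complex.I)^(n-1)) by ring]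
      rw [e1]
      push_cast
      ring
    rw [this, Complex.re_ofReal_mul, Complex.exp_ofReal_mul_I_re]
  rw [hre, ← hσdef, hwre]
  exact star_real n hn a b ρ σ hρ0.le hσ0.le ha hb (by rw [← hvre, ← hwre]; exact hvw)


noncomputable def rt (n : ℕ) (u : ℂ) : ℂ :=
  ((‖u‖ ^ ((n:ℝ)⁻¹) : ℝ) : ℂ) * Complex.exp ((u.arg / n : ℝ) * Complex.I)

lemma rt_pow (n : ℕ) (hn : 3 ≤ n) (u : ℂ) : rt n u ^ n = u := by
  have hn0 : (n:ℝ) ≠ 0 := by positivity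
  rw [rt, mul_pow, ← Complex.exp_nat_mul]
  have h1 : ((‖u‖ ^ ((n:ℝ)⁻¹) : ℝ) : ℂ) ^ n
      = ((‖u‖ : ℝ) : ℂ) := by
    norm_cast
    exact Real.rpow_inv_natCast_pow (norm_nonneg u) (by omega)
  have h2 : (n : ℂ) * ((u.arg / n : ℝ) : ℂ) * Complex.I = (u.arg : ℝ) * Complex.I := by
    have hnc : (n:ℂ) ≠ 0 := Nat.cast_ne_zero.mpr (by omega)
    push_cast
    field_simp
  rw [h1, ← mul_assoc, h2, Complex.norm_mul_exp_arg_mul_I]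

lemma rt_re (n : ℕ) (u : ℂ) :
    (rt n u).re = ‖u‖ ^ ((n:ℝ)⁻¹) * Real.cos (u.arg / n) := by
  rw [rt, Complex.re_ofReal_mul, Complex.exp_ofReal_mul_I_re]

lemma rt_abs (n : ℕ) (u : ℂ) :
    ‖(rt n u)‖ = ‖u‖ ^ ((n:ℝ)⁻¹) := by
  rw [rt, norm_mul, Complex.norm_exp_ofReal_mul_I, mul_one, Complex.norm_real, Real.norm_eq_abs,
    abs_of_nonneg (by positivity)]

lemma rt_sector (n : ℕ) (hn : 3 ≤ n) (u : ℂ) :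
    Real.cos (π/n) * ‖(rt n u)‖ ≤ (rt n u).re := by
  have hn1 : (1:ℝ) ≤ n := by exact_mod_cast Nat.one_le_of_lt hn
  have hπ := Real.pi_pos
  rw [rt_re, rt_abs, mul_comm]
  apply mul_le_mul_of_nonneg_left _ (by positivity)
  have h1 : |u.arg / n| ≤ π / n := by
    rw [abs_div, abs_of_nonneg (show (0:ℝ) ≤ (n:ℝ) by positivity)]
    gcongr
    exact Complex.abs_arg_le_pi u
  calc Real.cos (π/n) ≤ Real.cos |u.arg / n| :=
      Real.cos_le_cos_of_nonneg_of_le_pi (abs_nonneg _)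
        (div_le_self hπ.le hn1) h1
  _ = Real.cos (u.arg / n) := Real.cos_abs _


lemma neg_polar (r θ : ℝ) (hr : 0 < r) :
    -((r:ℂ) * Complex.exp (θ * Complex.I)) = (r:ℂ) * Complex.exp (((θ - π : ℝ)) * Complex.I) := by
  have : ((θ - π : ℝ) : ℂ) * Complex.I = θ * Complex.I - π * Complex.I := by push_cast; ring
  rw [this, Complex.exp_sub, Complex.exp_pi_mul_I]
  field_simp

lemma arg_polar (r θ : ℝ) (hr : 0 < r) (h1 : -π < θ) (h2 : θ ≤ π) :
    ((r:ℂ) * Complex.exp (θ * Complex.I)).arg = θ := by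
  rw [Complex.arg_real_mul _ hr]
  rw [Complex.exp_mul_I]
  exact Complex.arg_cos_add_sin_mul_I ⟨h1, h2⟩

lemma mem_to_root (n : ℕ) (hn : 3 ≤ n) (r θ : ℝ) (hr : 0 ≤ r)
    (hrle : r ≤ Real.cos (π/n) ^ n * ((Real.cos ((θ - π)/n))⁻¹) ^ n)
    (hθ : θ ∈ Set.Ico 0 (2*π)) :
    (rt n (-((r:ℂ) * Complex.exp (θ * Complex.I)))).re ≤ Real.cos (π/n) := by
  have hn1 : (1:ℝ) ≤ n := by exact_mod_cast Nat.one_le_of_lt hn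
  have hn3 : (3:ℝ) ≤ n := by exact_mod_cast hn
  have hπ := Real.pi_pos
  have hπn2 : π/n < π/2 := by
    apply div_lt_div_of_pos_left hπ (by norm_num) (by linarith)
  have hπn0 : 0 < π/(n:ℝ) := by positivity
  have hcπ : 0 < Real.cos (π/n) := Real.cos_pos_of_mem_Ioo ⟨by linarith, hπn2⟩
  have hφ : |(θ - π)/n| ≤ π/n := by
    rw [abs_div, abs_of_nonneg (show (0:ℝ) ≤ (n:ℝ) by positivity)]
    gcongr
    rw [abs_le]
    constructor <;> [linarith [hθ.1]; linarith [hθ.2]]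
  have hφ2 := abs_le.1 hφ
  have hcφ : 0 < Real.cos ((θ - π)/n) := by
    apply Real.cos_pos_of_mem_Ioo
    constructor <;> [linarith; linarith]
  rcases eq_or_lt_of_le hr with rfl | hr0
  · simp only [Complex.ofReal_zero, zero_mul, neg_zero]
    rw [rt_re]
    simp only [norm_zero]
    rw [Real.zero_rpow (by positivity), zero_mul]
    exact hcπ.le
  -- r > 0
  have hkey : Real.cos ((-((r:ℂ) * Complex.exp (θ * Complex.I))).arg / n)
      = Real.cos ((θ - π)/n) := by
    rw [neg_polar r θ hr0]
    rcases eq_or_lt_of_le hθ.1 with h0 | h0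
    · -- θ = 0, θ - π = -π
      have : ((r:ℂ) * Complex.exp (((θ - π : ℝ)) * Complex.I)) = ((-r : ℝ) : ℂ) := by
        rw [← h0]
        norm_num [Complex.exp_neg, Complex.exp_pi_mul_I]
      rw [this, Complex.arg_ofReal_of_neg (by linarith)]
      rw [← h0]
      rw [show (0 - π)/(n:ℝ) = -(π/n) by ring, Real.cos_neg]
    · rw [arg_polar r _ hr0 (by linarith [hθ.1]) (by linarith [hθ.2])]
  have habs : ‖(-((r:ℂ) * Complex.exp (θ * Complex.I)))‖ = r := by
    rw [norm_neg, norm_mul, Complex.norm_real, Real.norm_eq_abs, Complex.norm_exp_ofReal_mul_I,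
      mul_one, abs_of_nonneg hr]
  rw [rt_re, hkey, habs]
  -- now: r ^ (n⁻¹) * cos ((θ-π)/n) ≤ cos (π/n)
  have hb : r * Real.cos ((θ - π)/n) ^ n ≤ Real.cos (π/n) ^ n := by
    rw [inv_pow] at hrle
    calc r * Real.cos ((θ - π)/n) ^ n
        ≤ (Real.cos (π/n) ^ n * (Real.cos ((θ - π)/n) ^ n)⁻¹) * Real.cos ((θ - π)/n) ^ n :=
          mul_le_mul_of_nonneg_right hrle (by positivity)
    _ = Real.cos (π/n) ^ n := by field_simp
  have hpow : (r ^ ((n:ℝ)⁻¹) * Real.cos ((θ - π)/n)) ^ n ≤ Real.cos (π/n) ^ n := by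
    rw [mul_pow, Real.rpow_inv_natCast_pow hr (by omega)]
    exact hb
  exact le_of_pow_le_pow_left₀ (by omega) hcπ.le hpow


lemma root_to_mem (n : ℕ) (hn : 3 ≤ n) (z : ℂ)
    (h : (rt n (-z)).re ≤ Real.cos (π/n)) :
    ∃ r θ : ℝ, 0 ≤ r ∧
      r ≤ Real.cos (π / n) ^ n * ((Real.cos ((θ - π) / n))⁻¹) ^ n ∧
      θ ∈ Set.Ico 0 (2 * π) ∧ z = (r : ℂ) * Complex.exp (θ * Complex.I) := by
  have hn1 : (1:ℝ) ≤ n := by exact_mod_cast Nat.one_le_of_lt hn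
  have hn3 : (3:ℝ) ≤ n := by exact_mod_cast hn
  have hπ := Real.pi_pos
  have hπn2 : π/n < π/2 := by
    apply div_lt_div_of_pos_left hπ (by norm_num) (by linarith)
  have hπn0 : 0 < π/(n:ℝ) := by positivity
  have hcπ : 0 < Real.cos (π/n) := Real.cos_pos_of_mem_Ioo ⟨by linarith, hπn2⟩
  rcases eq_or_ne z 0 with rfl | hz0
  · refine ⟨0, 0, le_refl 0, ?_, ⟨le_refl 0, by linarith⟩, by simp⟩
    have hc : 0 < Real.cos ((0 - π)/n) := by
      rw [show (0 - π)/(n:ℝ) = -(π/n) by ring, Real.cos_neg]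
      exact hcπ
    positivity
  have hu0 : -z ≠ 0 := neg_ne_zero.mpr hz0
  obtain ⟨A, hAdef⟩ : ∃ A, A = (-z).arg := ⟨_, rfl⟩
  have hA1 : -π < A := hAdef ▸ Complex.neg_pi_lt_arg (-z)
  have hA2 : A ≤ π := hAdef ▸ Complex.arg_le_pi (-z)
  obtain ⟨ρ, hρdef⟩ : ∃ ρ, ρ = ‖z‖ := ⟨_, rfl⟩
  have hρ0 : 0 < ρ := hρdef ▸ norm_pos_iff.mpr hz0
  have habs : ‖(-z)‖ = ρ := by rw [norm_neg, hρdef]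
  have hAn : |A / n| ≤ π/n := by
    rw [abs_div, abs_of_nonneg (show (0:ℝ) ≤ (n:ℝ) by positivity)]
    gcongr
    rw [abs_le]; exact ⟨hA1.le, hA2⟩
  have hAn2 := abs_le.1 hAn
  have hcA : 0 < Real.cos (A / n) := by
    apply Real.cos_pos_of_mem_Ioo
    constructor <;> [linarith; linarith]
  have hre : (rt n (-z)).re = ρ ^ ((n:ℝ)⁻¹) * Real.cos (A / n) := by
    rw [rt_re, habs, hAdef]
  -- main bound, generic in final angle φ with cos φn = cos (A/n)
  have hbound : ∀ φ : ℝ, Real.cos (φ/n) = Real.cos (A/n) →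
      ρ ≤ Real.cos (π / n) ^ n * ((Real.cos (φ / n))⁻¹) ^ n := by
    intro φ hφ
    rw [hφ]
    have h1 : ρ ^ ((n:ℝ)⁻¹) * Real.cos (A / n) ≤ Real.cos (π/n) := by
      rw [← hre]; exact h
    have h2 : ρ * Real.cos (A/n) ^ n ≤ Real.cos (π/n) ^ n := by
      have := pow_le_pow_left₀ (by positivity) h1 n
      rwa [mul_pow, Real.rpow_inv_natCast_pow hρ0.le (by omega)] at this
    rw [inv_pow]
    rw [← sub_nonneg] at h2 ⊢
    have hpos : (0:ℝ) < Real.cos (A/n) ^ n := by positivity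
    calc (0:ℝ) ≤ (Real.cos (π/n) ^ n - ρ * Real.cos (A/n) ^ n) / Real.cos (A/n) ^ n :=
          div_nonneg h2 hpos.le
    _ = Real.cos (π/n) ^ n * (Real.cos (A/n) ^ n)⁻¹ - ρ := by field_simp
  have hz : -z = (ρ:ℂ) * Complex.exp ((A:ℝ) * Complex.I) := by
    rw [hρdef, hAdef]
    rw [show ‖z‖ = ‖(-z)‖ by rw [norm_neg]]
    exact (Complex.norm_mul_exp_arg_mul_I (-z)).symm
  rcases eq_or_lt_of_le hA2 with hAπ | hAπ
  · -- A = π : take θ = 0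
    refine ⟨ρ, 0, hρ0.le, ?_, ⟨le_refl 0, by linarith⟩, ?_⟩
    · apply hbound
      rw [show (0 - π)/(n:ℝ) = -(π/n) by ring, Real.cos_neg, hAπ]
    · have : -z = -(ρ:ℂ) := by
        rw [hz, hAπ]
        norm_num [Complex.exp_pi_mul_I]
      have hz' : z = (ρ:ℂ) := by
        have := congrArg Neg.neg this
        simpa using this
      rw [hz']
      norm_num
  · -- A < π : take θ = A + π
    refine ⟨ρ, A + π, hρ0.le, ?_, ⟨by linarith, by linarith⟩, ?_⟩
    · apply hbound
      rw [show (A + π - π)/(n:ℝ) = A/n by ring]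
    · have : ((A + π : ℝ) : ℂ) * Complex.I = (A:ℝ) * Complex.I + π * Complex.I := by
        push_cast; ring
      rw [this, Complex.exp_add, Complex.exp_pi_mul_I]
      have := congrArg Neg.neg hz
      simp only [neg_neg] at this
      rw [this]
      ring


theorem stmt_14 (n : ℕ) (hn : 3 ≤ n) :
    Convex ℝ {z : ℂ | ∃ r θ : ℝ, 0 ≤ r ∧
      r ≤ Real.cos (π / n) ^ n * ((Real.cos ((θ - π) / n))⁻¹) ^ n ∧
      θ ∈ Set.Ico 0 (2 * π) ∧ z = (r : ℂ) * Complex.exp (θ * Complex.I)} := by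
  have hn3 : (3:ℝ) ≤ n := by exact_mod_cast hn
  have hπ := Real.pi_pos
  have hπn2 : π/n < π/2 := by
    apply div_lt_div_of_pos_left hπ (by norm_num) (by linarith)
  have hπn0 : 0 < π/(n:ℝ) := by positivity
  have hcπ : 0 < Real.cos (π/n) := Real.cos_pos_of_mem_Ioo ⟨by linarith, hπn2⟩
  intro z₁ hz₁ z₂ hz₂ t s ht hs hts
  simp only [Set.mem_setOf_eq] at hz₁ hz₂ ⊢
  obtain ⟨r₁, θ₁, hr₁, hle₁, hθ₁, hzeq₁⟩ := hz₁
  obtain ⟨r₂, θ₂, hr₂, hle₂, hθ₂, hzeq₂⟩ := hz₂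
  have h₁ : (rt n (-z₁)).re ≤ Real.cos (π/n) := by
    rw [hzeq₁]; exact mem_to_root n hn r₁ θ₁ hr₁ hle₁ hθ₁
  have h₂ : (rt n (-z₂)).re ≤ Real.cos (π/n) := by
    rw [hzeq₂]; exact mem_to_root n hn r₂ θ₂ hr₂ hle₂ hθ₂
  apply root_to_mem n hn
  by_contra hcon
  push_neg at hcon
  obtain ⟨V, hVdef⟩ : ∃ V, V = rt n (-(t • z₁ + s • z₂)) := ⟨_, rfl⟩
  rw [← hVdef] at hcon
  have hVpow : V ^ n = -(t • z₁ + s • z₂) := by rw [hVdef, rt_pow n hn]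
  have hVsec : Real.cos (π/n) * ‖V‖ ≤ V.re := by
    rw [hVdef]; exact rt_sector n hn _
  have hVre0 : 0 < V.re := lt_trans hcπ hcon
  have hV0 : V ≠ 0 := by
    intro hV
    rw [hV] at hcon
    simp at hcon
    linarith
  have hB0 : 0 < ‖V‖ := norm_pos_iff.mpr hV0
  obtain ⟨κ, hκdef⟩ : ∃ κ, κ = Real.cos (π/n) / V.re := ⟨_, rfl⟩
  have hκ0 : 0 < κ := hκdef ▸ div_pos hcπ hVre0
  have hκ1 : κ < 1 := by rw [hκdef]; exact (div_lt_one hVre0).2 hcon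
  obtain ⟨w, hwdef⟩ : ∃ w : ℂ, w = (κ:ℝ) * V := ⟨_, rfl⟩
  have hwre : w.re = Real.cos (π/n) := by
    rw [hwdef, Complex.re_ofReal_mul, hκdef]
    field_simp
  have hwabs : ‖w‖ = κ * ‖V‖ := by
    rw [hwdef, norm_mul, Complex.norm_real, Real.norm_eq_abs, abs_of_pos hκ0]
  have hwsec : Real.cos (π/n) * ‖w‖ ≤ w.re := by
    calc Real.cos (π/n) * ‖w‖ = κ * (Real.cos (π/n) * ‖V‖) := by
          rw [hwabs]; ring
    _ ≤ κ * V.re := mul_le_mul_of_nonneg_left hVsec hκ0.le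
    _ = Real.cos (π/n) := by rw [hκdef]; field_simp
    _ = w.re := hwre.symm
  have S₁ := star_complex n hn (rt n (-z₁)) w (rt_sector n hn _) hwsec
    (by rw [hwre]; exact h₁)
  have S₂ := star_complex n hn (rt n (-z₂)) w (rt_sector n hn _) hwsec
    (by rw [hwre]; exact h₂)
  rw [rt_pow n hn] at S₁ S₂
  obtain ⟨Q, hQdef⟩ : ∃ Q, Q = (starRingEnd ℂ w)^(n-1) := ⟨_, rfl⟩
  rw [← hQdef] at S₁ S₂
  obtain ⟨M, hMdef⟩ : ∃ M, M = ‖w‖ ^ (n-1) * ‖w‖ ^ (n-1) * w.re := ⟨_, rfl⟩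
  rw [← hMdef] at S₁ S₂
  have hub : ((-(t • z₁ + s • z₂)) * Q).re ≤ M := by
    have hsplit : (-(t • z₁ + s • z₂)) * Q = (t:ℂ) * (-z₁ * Q) + (s:ℂ) * (-z₂ * Q) := by
      rw [Complex.real_smul, Complex.real_smul]
      ring
    rw [hsplit, Complex.add_re, Complex.re_ofReal_mul, Complex.re_ofReal_mul]
    calc t * (-z₁ * Q).re + s * (-z₂ * Q).re ≤ t * M + s * M :=
        add_le_add (mul_le_mul_of_nonneg_left S₁ ht) (mul_le_mul_of_nonneg_left S₂ hs)
    _ = M := by rw [← add_mul, hts, one_mul]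
  have hVconj : (-(t • z₁ + s • z₂)) * Q
      = ((κ^(n-1) * (Complex.normSq V)^(n-1) : ℝ) : ℂ) * V := by
    rw [← hVpow, hQdef, hwdef, map_mul, Complex.conj_ofReal]
    rw [mul_pow]
    rw [show V ^ n = V^(n-1) * V by
      conv_lhs => rw [show n = (n-1)+1 by omega, pow_succ]]
    rw [show V^(n-1) * V * ((κ:ℂ)^(n-1) * (starRingEnd ℂ V)^(n-1))
        = (κ:ℂ)^(n-1) * (V * starRingEnd ℂ V)^(n-1) * V by rw [mul_pow]; ring]
    rw [Complex.mul_conj]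
    push_cast
    ring
  have hlhs : ((-(t • z₁ + s • z₂)) * Q).re = κ^(n-1) * (Complex.normSq V)^(n-1) * V.re := by
    rw [hVconj, Complex.re_ofReal_mul]
  have hnormSq : (Complex.normSq V)^(n-1) = ‖V‖^(n-1) * ‖V‖^(n-1) := by
    rw [← Complex.sq_norm, sq, mul_pow]
  have hfin : κ^(n-1) * (‖V‖^(n-1) * ‖V‖^(n-1)) * V.re
      ≤ (κ^(n-1) * ‖V‖^(n-1)) * (κ^(n-1) * ‖V‖^(n-1)) * Real.cos (π/n) := by
    have := hub
    rw [hlhs, hnormSq, hMdef, hwabs, hwre, mul_pow] at this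
    linarith [this]
  have hK0 : 0 < κ^(n-1) := pow_pos hκ0 _
  have hK1 : κ^(n-1) < 1 := pow_lt_one₀ hκ0.le hκ1 (by omega)
  have hBB : 0 < ‖V‖^(n-1) * ‖V‖^(n-1) := by positivity
  have hVle : V.re ≤ κ^(n-1) * Real.cos (π/n) := by
    apply le_of_mul_le_mul_left _ (mul_pos hK0 hBB)
    calc κ^(n-1) * (‖V‖^(n-1) * ‖V‖^(n-1)) * V.re
        ≤ (κ^(n-1) * ‖V‖^(n-1)) * (κ^(n-1) * ‖V‖^(n-1)) * Real.cos (π/n) :=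
          hfin
    _ = κ^(n-1) * (‖V‖^(n-1) * ‖V‖^(n-1)) * (κ^(n-1) * Real.cos (π/n)) := by
          ring
  have : κ^(n-1) * Real.cos (π/n) < Real.cos (π/n) := by nlinarith
  linarith
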